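/- If 0 < x ≤ min((αβ)^(1/β), 1) then the second derivative of log f(x | α, β) is nonpositive; in particular log f is concave on (0, min((αβ)^(1/β), 1)]. -/

import Mathlib

open Real

private lemma ug_eventuallyEq (α β : ℝ) (hα : 0 < α) (hβ : 0 < β) {x : ℝ} (hx : 0 < x) :
    (fun y : ℝ => Real.log (α * β * Real.exp (-α * (1 / y ^ β - 1)) / y ^ (1 + β)))
      =ᶠ[nhds x]
    (fun y : ℝ => Real.log (α * β) + α - α * y ^ (-β) - (1 + β) * Real.log y) := by
  filter_upwards [Ioi_mem_nhds hx] with y hy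
  have hy0 : (0:ℝ) < y := hy
  have hyb : (0:ℝ) < y ^ β := Real.rpow_pos_of_pos hy0 β
  have hy1b : (0:ℝ) < y ^ (1 + β) := Real.rpow_pos_of_pos hy0 _
  have hab : (0:ℝ) < α * β := mul_pos hα hβ
  rw [Real.log_div (by positivity) (ne_of_gt hy1b),
      Real.log_mul (ne_of_gt hab) (Real.exp_ne_zero _),
      Real.log_exp, Real.log_rpow hy0,
      Real.rpow_neg hy0.le]
  ring

private lemma ug_deriv_eq (α β : ℝ) (hα : 0 < α) (hβ : 0 < β) {x : ℝ} (hx : 0 < x) :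
    deriv (fun y : ℝ => Real.log (α * β * Real.exp (-α * (1 / y ^ β - 1)) / y ^ (1 + β))) x
      = α * β * x ^ (-β - 1) - (1 + β) * x⁻¹ := by
  have hG : HasDerivAt
      (fun y : ℝ => Real.log (α * β) + α - α * y ^ (-β) - (1 + β) * Real.log y)
      (α * β * x ^ (-β - 1) - (1 + β) * x⁻¹) x := by
    have h1 : HasDerivAt (fun y : ℝ => y ^ (-β)) (-β * x ^ (-β - 1)) x :=
      Real.hasDerivAt_rpow_const (Or.inl hx.ne')
    have h2 : HasDerivAt Real.log x⁻¹ x := Real.hasDerivAt_log hx.ne'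
    have := ((hasDerivAt_const x (Real.log (α * β) + α)).sub
        (h1.const_mul α)).sub (h2.const_mul (1 + β))
    exact this.congr_deriv (by ring)
  rw [(ug_eventuallyEq α β hα hβ hx).deriv_eq, hG.deriv]

theorem unitGompertz_log_concave_region (α β : ℝ) (hα : 0 < α) (hβ : 0 < β) :
    (∀ x : ℝ, 0 < x → x ≤ min ((α * β) ^ (1 / β)) 1 →
      deriv (deriv (fun y : ℝ =>
          Real.log (α * β * Real.exp (-α * (1 / y ^ β - 1)) / y ^ (1 + β)))) x ≤ 0) ∧
    ConcaveOn ℝ (Set.Ioc (0:ℝ) (min ((α * β) ^ (1 / β)) 1))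
      (fun y : ℝ => Real.log (α * β * Real.exp (-α * (1 / y ^ β - 1)) / y ^ (1 + β))) := by
  set F := fun y : ℝ => Real.log (α * β * Real.exp (-α * (1 / y ^ β - 1)) / y ^ (1 + β)) with hF
  set φ := fun y : ℝ => α * β * y ^ (-β - 1) - (1 + β) * y⁻¹ with hφ
  have hab : (0:ℝ) < α * β := mul_pos hα hβ
  -- deriv F = φ near any positive point
  have hderivF : ∀ x : ℝ, 0 < x → deriv F =ᶠ[nhds x] φ := by
    intro x hx
    filter_upwards [Ioi_mem_nhds hx] with y hy
    exact ug_deriv_eq α β hα hβ hy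
  have hφd : ∀ x : ℝ, 0 < x →
      HasDerivAt φ (α * β * ((-β - 1) * x ^ (-β - 1 - 1)) + (1 + β) * (x ^ 2)⁻¹) x := by
    intro x hx
    have h1 : HasDerivAt (fun y : ℝ => y ^ (-β - 1)) ((-β - 1) * x ^ (-β - 1 - 1)) x :=
      Real.hasDerivAt_rpow_const (Or.inl hx.ne')
    have h2 : HasDerivAt (fun y : ℝ => y⁻¹) (-(x ^ 2)⁻¹) x := hasDerivAt_inv hx.ne'
    have := (h1.const_mul (α * β)).sub (h2.const_mul (1 + β))
    exact this.congr_deriv (by ring)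
  -- key second derivative bound
  have key : ∀ x : ℝ, 0 < x → x ≤ min ((α * β) ^ (1 / β)) 1 →
      deriv (deriv F) x ≤ 0 := by
    intro x hx hxm
    have hx1 : x ≤ (α * β) ^ (1 / β) := le_trans hxm (min_le_left _ _)
    rw [(hderivF x hx).deriv_eq, (hφd x hx).deriv]
    -- x^β ≤ αβ
    have hxb : x ^ β ≤ α * β := by
      have : x ^ β ≤ ((α * β) ^ (1 / β)) ^ β :=
        Real.rpow_le_rpow hx.le hx1 hβ.le
      rwa [one_div, Real.rpow_inv_rpow hab.le hβ.ne'] at this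
    have hxbpos : (0:ℝ) < x ^ β := Real.rpow_pos_of_pos hx β
    have h1 : (1:ℝ) ≤ α * β * x ^ (-β) := by
      rw [Real.rpow_neg hx.le, ← div_eq_mul_inv, le_div_iff₀ hxbpos, one_mul]
      exact hxb
    have hsplit : x ^ (-β - 1 - 1) = x ^ (-β) * (x ^ 2)⁻¹ := by
      rw [show (-β - 1 - 1 : ℝ) = -β + (-2) by ring, Real.rpow_add hx,
        show ((-2:ℝ)) = ((-2 : ℤ) : ℝ) by norm_num, Real.rpow_intCast]
      norm_num
    rw [hsplit]
    have hs : (0:ℝ) < (x ^ 2)⁻¹ := by positivity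
    nlinarith [mul_le_mul_of_nonneg_right h1 hs.le, mul_pos hs hβ]
  refine ⟨key, ?_⟩
  set m := min ((α * β) ^ (1 / β)) 1 with hm
  have hm0 : 0 < m := lt_min (Real.rpow_pos_of_pos hab _) one_pos
  have hint : interior (Set.Ioc (0:ℝ) m) = Set.Ioo (0:ℝ) m := interior_Ioc
  have hdiffF : ∀ x ∈ Set.Ioi (0:ℝ), DifferentiableAt ℝ F x := by
    intro x hx
    have hG : HasDerivAt
        (fun y : ℝ => Real.log (α * β) + α - α * y ^ (-β) - (1 + β) * Real.log y)
        (α * β * x ^ (-β - 1) - (1 + β) * x⁻¹) x := by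
      have h1 : HasDerivAt (fun y : ℝ => y ^ (-β)) (-β * x ^ (-β - 1)) x :=
        Real.hasDerivAt_rpow_const (Or.inl (ne_of_gt hx))
      have h2 : HasDerivAt Real.log x⁻¹ x := Real.hasDerivAt_log (ne_of_gt hx)
      have := ((hasDerivAt_const x (Real.log (α * β) + α)).sub
          (h1.const_mul α)).sub (h2.const_mul (1 + β))
      exact this.congr_deriv (by ring)
    exact (ug_eventuallyEq α β hα hβ hx).symm.differentiableAt_iff.mp hG.differentiableAt
  apply concaveOn_of_deriv2_nonpos (convex_Ioc _ _)
  · intro x hx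
    exact (hdiffF x hx.1).continuousAt.continuousWithinAt
  · rw [hint]
    intro x hx
    exact (hdiffF x hx.1).differentiableWithinAt
  · rw [hint]
    intro x hx
    have : DifferentiableAt ℝ φ x := (hφd x hx.1).differentiableAt
    exact ((hderivF x hx.1).symm.differentiableAt_iff.mp this).differentiableWithinAt
  · rw [hint]
    intro x hx
    have := key x hx.1 hx.2.le
    simpa [Function.iterate_succ, Function.comp] using this
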